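/- The relation R_Cfg between CES and CESH configurations is a simulation: if cfg₁ ⟶CES cfg₁' and R_Cfg cfg₁ cfg₂, then there exists cfg₂' with cfg₂ ⟶CESH cfg₂' and R_Cfg cfg₁' cfg₂'. -/

import Mathlib

mutual
inductive Instr : Type where
  | var : Nat → Instr
  | clos : Code → Instr
  | appl : Instr
  | lit : Nat → Instr
  | op : (Nat → Nat → Nat) → Instr
inductive Code : Type where
  | seq : Instr → Code → Code
  | cond : Code → Code → Code
  | END : Code
  | RET : Code
end

namespace CES

inductive Value : Type where
  | nat : Nat → Value
  | clos : Code → List Value → Value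

abbrev Env := List Value

inductive StackElem : Type where
  | val : Value → StackElem
  | cont : Code → Env → StackElem

abbrev Stack := List StackElem
abbrev Config := Code × Env × Stack

/-- The CES machine transition relation. -/
inductive Step : Config → Config → Prop where
  | var {n : Nat} {c : Code} {e : Env} {s : Stack} {v : Value} :
      e[n]? = some v →
      Step (.seq (.var n) c, e, s) (c, e, .val v :: s)
  | clos {c' c : Code} {e : Env} {s : Stack} :
      Step (.seq (.clos c') c, e, s) (c, e, .val (.clos c' e) :: s)
  | appl {c c' : Code} {e e' : Env} {v : Value} {s : Stack} :
      Step (.seq .appl c, e, .val v :: .val (.clos c' e') :: s)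
           (c', v :: e', .cont c e :: s)
  | ret {c : Code} {e e' : Env} {v : Value} {s : Stack} :
      Step (.RET, e, .val v :: .cont c e' :: s) (c, e', .val v :: s)
  | lit {n : Nat} {c : Code} {e : Env} {s : Stack} :
      Step (.seq (.lit n) c, e, s) (c, e, .val (.nat n) :: s)
  | op {f : Nat → Nat → Nat} {c : Code} {e : Env} {n₁ n₂ : Nat} {s : Stack} :
      Step (.seq (.op f) c, e, .val (.nat n₁) :: .val (.nat n₂) :: s)
           (c, e, .val (.nat (f n₁ n₂)) :: s)
  | cond0 {c c' : Code} {e : Env} {s : Stack} :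
      Step (.cond c c', e, .val (.nat 0) :: s) (c, e, s)
  | condS {c c' : Code} {e : Env} {n : Nat} {s : Stack} :
      Step (.cond c c', e, .val (.nat (n+1)) :: s) (c', e, s)

end CES

namespace CESH

abbrev Ptr : Type := Nat

inductive Value : Type where
  | nat : Nat → Value
  | clos : Ptr → Value

abbrev Env := List Value
abbrev Closure := Code × Env

inductive StackElem : Type where
  | val : Value → StackElem
  | cont : Closure → StackElem

abbrev Stack := List StackElem
abbrev Heap := List Closure
abbrev Config := Code × Env × Stack × Heap

/-- The CESH machine transition relation, with a list-based heap. -/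
inductive Step : Config → Config → Prop where
  | var {n : Nat} {c : Code} {e : Env} {s : Stack} {h : Heap} {v : Value} :
      e[n]? = some v →
      Step (.seq (.var n) c, e, s, h) (c, e, .val v :: s, h)
  | clos {c' c : Code} {e : Env} {s : Stack} {h : Heap} :
      Step (.seq (.clos c') c, e, s, h)
           (c, e, .val (.clos h.length) :: s, h ++ [(c', e)])
  | appl {c c' : Code} {e e' : Env} {v : Value} {ptr : Ptr} {s : Stack} {h : Heap} :
      h[ptr]? = some (c', e') →
      Step (.seq .appl c, e, .val v :: .val (.clos ptr) :: s, h)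
           (c', v :: e', .cont (c, e) :: s, h)
  | ret {c : Code} {e e' : Env} {v : Value} {s : Stack} {h : Heap} :
      Step (.RET, e, .val v :: .cont (c, e') :: s, h) (c, e', .val v :: s, h)
  | lit {n : Nat} {c : Code} {e : Env} {s : Stack} {h : Heap} :
      Step (.seq (.lit n) c, e, s, h) (c, e, .val (.nat n) :: s, h)
  | op {f : Nat → Nat → Nat} {c : Code} {e : Env} {n₁ n₂ : Nat} {s : Stack} {h : Heap} :
      Step (.seq (.op f) c, e, .val (.nat n₁) :: .val (.nat n₂) :: s, h)
           (c, e, .val (.nat (f n₁ n₂)) :: s, h)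
  | cond0 {c c' : Code} {e : Env} {s : Stack} {h : Heap} :
      Step (.cond c c', e, .val (.nat 0) :: s, h) (c, e, s, h)
  | condS {c c' : Code} {e : Env} {n : Nat} {s : Stack} {h : Heap} :
      Step (.cond c c', e, .val (.nat (n+1)) :: s, h) (c', e, s, h)

end CESH

mutual
/-- Relation between CES values and CESH values, parameterised by the CESH heap:
equal naturals are related, and a CES closure is related to a pointer that
dereferences to a componentwise-related CESH closure. -/
inductive RVal (h : CESH.Heap) : CES.Value → CESH.Value → Prop where
  | nat {n : Nat} : RVal h (.nat n) (.nat n)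
  | clos {c : Code} {e₁ : CES.Env} {e₂ : CESH.Env} {ptr : CESH.Ptr} :
      h[ptr]? = some (c, e₂) → REnv h e₁ e₂ → RVal h (.clos c e₁) (.clos ptr)
/-- Pointwise relation between CES and CESH environments. -/
inductive REnv (h : CESH.Heap) : CES.Env → CESH.Env → Prop where
  | nil : REnv h [] []
  | cons {v₁ : CES.Value} {e₁ : CES.Env} {v₂ : CESH.Value} {e₂ : CESH.Env} :
      RVal h v₁ v₂ → REnv h e₁ e₂ → REnv h (v₁ :: e₁) (v₂ :: e₂)
end

/-- Relation between CES closures and CESH closures: equal code, related environments. -/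
def RClos (h : CESH.Heap) (cl₁ : Code × CES.Env) (cl₂ : CESH.Closure) : Prop :=
  cl₁.1 = cl₂.1 ∧ REnv h cl₁.2 cl₂.2

/-- Relation between CES and CESH stack elements. -/
inductive RStackElem (h : CESH.Heap) : CES.StackElem → CESH.StackElem → Prop where
  | val {v₁ : CES.Value} {v₂ : CESH.Value} :
      RVal h v₁ v₂ → RStackElem h (.val v₁) (.val v₂)
  | cont {c : Code} {e₁ : CES.Env} {e₂ : CESH.Env} :
      REnv h e₁ e₂ → RStackElem h (.cont c e₁) (.cont (c, e₂))

/-- Pointwise relation between stacks. -/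
def RStack (h : CESH.Heap) : CES.Stack → CESH.Stack → Prop :=
  List.Forall₂ (RStackElem h)

/-- The relation between CES and CESH configurations. -/
def RCfg : CES.Config → CESH.Config → Prop :=
  fun cfg₁ cfg₂ =>
    match cfg₁, cfg₂ with
    | (c₁, e₁, s₁), (c₂, e₂, s₂, h) => c₁ = c₂ ∧ REnv h e₁ e₂ ∧ RStack h s₁ s₂

mutual
theorem RVal_mono {h : CESH.Heap} {l : CESH.Heap} {v₁ v₂} (hv : RVal h v₁ v₂) :
    RVal (h ++ l) v₁ v₂ := by
  cases hv with
  | nat => exact .nat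
  | clos hg he =>
      exact .clos (by rw [List.getElem?_append_left (List.getElem?_eq_some_iff.mp hg).1]; exact hg)
        (REnv_mono he)
theorem REnv_mono {h : CESH.Heap} {l : CESH.Heap} {e₁ e₂} (he : REnv h e₁ e₂) :
    REnv (h ++ l) e₁ e₂ := by
  cases he with
  | nil => exact .nil
  | cons hv he => exact .cons (RVal_mono hv) (REnv_mono he)
end

theorem RStackElem_mono {h l : CESH.Heap} {a b} (hs : RStackElem h a b) :
    RStackElem (h ++ l) a b := by
  cases hs with
  | val hv => exact .val (RVal_mono hv)
  | cont he => exact .cont (REnv_mono he)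

theorem RStack_mono {h l : CESH.Heap} {s₁ s₂} (hs : RStack h s₁ s₂) :
    RStack (h ++ l) s₁ s₂ :=
  List.Forall₂.imp (fun _ _ => RStackElem_mono) hs

theorem REnv_get {h : CESH.Heap} {e₁ e₂} (he : REnv h e₁ e₂) (n : Nat) {v₁}
    (hg : e₁[n]? = some v₁) : ∃ v₂, e₂[n]? = some v₂ ∧ RVal h v₁ v₂ := by
  induction n generalizing e₁ e₂ with
  | zero =>
      cases he with
      | nil => simp at hg
      | cons hv _ => exact ⟨_, rfl, by cases hg; exact hv⟩
  | succ n ih =>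
      cases he with
      | nil => simp at hg
      | cons _ he => exact ih he hg


/-- `RCfg` is a simulation between the CES and CESH machines. -/
theorem RCfg_simulation (cfg₁ cfg₁' : CES.Config) (cfg₂ : CESH.Config)
    (hstep : CES.Step cfg₁ cfg₁') (hR : RCfg cfg₁ cfg₂) :
    ∃ cfg₂', CESH.Step cfg₂ cfg₂' ∧ RCfg cfg₁' cfg₂' := by
  obtain ⟨c₂, e₂, s₂, h⟩ := cfg₂
  obtain ⟨c₁, e₁, s₁⟩ := cfg₁
  obtain ⟨hc, he, hs⟩ := hR
  subst hc
  cases hstep with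
  | var hg =>
      obtain ⟨v₂, hg₂, hv⟩ := REnv_get he _ hg
      exact ⟨_, .var hg₂, rfl, he, .cons (.val hv) hs⟩
  | clos =>
      refine ⟨_, .clos, rfl, REnv_mono he, .cons (.val (.clos ?_ (REnv_mono he))) (RStack_mono hs)⟩
      simp
  | appl =>
      rcases hs with _ | ⟨hv, hs⟩
      rcases hs with _ | ⟨hcl, hs⟩
      cases hv with | val hv =>
      cases hcl with | val hcl =>
      cases hcl with | clos hg henv =>
      exact ⟨_, .appl hg, rfl, .cons hv henv, .cons (.cont he) hs⟩
  | ret =>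
      rcases hs with _ | ⟨hv, hs⟩
      rcases hs with _ | ⟨hk, hs⟩
      cases hv with | val hv =>
      cases hk with | cont he' =>
      exact ⟨_, .ret, rfl, he', .cons (.val hv) hs⟩
  | lit => exact ⟨_, .lit, rfl, he, .cons (.val .nat) hs⟩
  | op =>
      rcases hs with _ | ⟨hv₁, hs⟩
      rcases hs with _ | ⟨hv₂, hs⟩
      cases hv₁ with | val hv₁ =>
      cases hv₂ with | val hv₂ =>
      cases hv₁; cases hv₂
      exact ⟨_, .op, rfl, he, .cons (.val .nat) hs⟩
  | cond0 =>
      rcases hs with _ | ⟨hv, hs⟩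
      cases hv with | val hv =>
      cases hv
      exact ⟨_, .cond0, rfl, he, hs⟩
  | condS =>
      rcases hs with _ | ⟨hv, hs⟩
      cases hv with | val hv =>
      cases hv
      exact ⟨_, .condS, rfl, he, hs⟩
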